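/- For every m > 3, the vector d = (1, 2, …, m−2, (m−2)(m−1)/2, (m−2)(m−1)/2) ∈ ℕ^m is 1-balanced but not 2-balanced. -/

import Mathlib

open scoped BigOperators

def kBalanced {m : ℕ} (d : Fin m → ℕ) (k : ℕ) : Prop :=
  ∀ I : Finset (Fin m), I.card = k → ∑ i ∈ I, d i < ∑ i ∈ Iᶜ, d i

lemma total_sum (m : ℕ) (hm : 3 < m) :
    ∑ i : Fin m, (if (i : ℕ) < m - 2 then (i : ℕ) + 1 else (m - 2) * (m - 1) / 2)
      = 3 * ((m - 2) * (m - 1) / 2) := by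
  rw [Fin.sum_univ_eq_sum_range (fun i => if i < m - 2 then i + 1 else (m - 2) * (m - 1) / 2)]
  rw [← Finset.sum_range_add_sum_Ico _ (show m - 2 ≤ m by omega)]
  have h1 : ∑ i ∈ Finset.range (m - 2), (if i < m - 2 then i + 1 else (m - 2) * (m - 1) / 2)
      = (m - 2) * (m - 1) / 2 := by
    rw [Finset.sum_congr rfl (fun i hi => if_pos (Finset.mem_range.mp hi))]
    have := Finset.sum_range_id_mul_two (m - 1)
    have h2 : ∑ i ∈ Finset.range (m - 2), (i + 1) = ∑ i ∈ Finset.range (m - 1), i := by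
      rw [show m - 1 = (m - 2) + 1 by omega, Finset.sum_range_succ']
      simp
    have hcc : (m - 1) * (m - 1 - 1) = (m - 2) * (m - 1) := by
      rw [show m - 1 - 1 = m - 2 by omega, Nat.mul_comm]
    omega
  have h2 : ∑ i ∈ Finset.Ico (m - 2) m, (if i < m - 2 then i + 1 else (m - 2) * (m - 1) / 2)
      = 2 * ((m - 2) * (m - 1) / 2) := by
    rw [Finset.sum_congr rfl (fun i hi => if_neg (by
      have := (Finset.mem_Ico.mp hi).1; omega))]
    rw [Finset.sum_const, Nat.card_Ico]
    have : m - (m - 2) = 2 := by omega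
    rw [this, smul_eq_mul]
  omega

theorem example_one_balanced_not_two_balanced (m : ℕ) (hm : 3 < m) :
    kBalanced (fun i : Fin m => if (i : ℕ) < m - 2 then (i : ℕ) + 1
      else (m - 2) * (m - 1) / 2) 1 ∧
    ¬ kBalanced (fun i : Fin m => if (i : ℕ) < m - 2 then (i : ℕ) + 1
      else (m - 2) * (m - 1) / 2) 2 := by
  set M := (m - 2) * (m - 1) / 2 with hM
  have hMpos : 3 ≤ M := by
    have : (m - 2) * (m - 1) ≥ 2 * 3 := Nat.mul_le_mul (by omega) (by omega)
    omega
  set d : Fin m → ℕ := fun i : Fin m => if (i : ℕ) < m - 2 then (i : ℕ) + 1 else M with hd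
  have hdle : ∀ i, d i ≤ M := by
    intro i
    simp only [hd]
    split
    · have : (i : ℕ) + 1 ≤ m - 2 := by omega
      calc (i : ℕ) + 1 ≤ m - 2 := this
        _ ≤ M := by
          have : (m - 2) * 2 ≤ (m - 2) * (m - 1) := Nat.mul_le_mul_left _ (by omega)
          omega
    · exact le_refl M
  have htot : ∑ i : Fin m, d i = 3 * M := total_sum m hm
  constructor
  · intro I hI
    obtain ⟨i, hi⟩ := Finset.card_eq_one.mp hI
    have hcompl : ∑ j ∈ Iᶜ, d j + ∑ j ∈ I, d j = 3 * M := by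
      rw [Finset.sum_compl_add_sum, htot]
    rw [hi, Finset.sum_singleton] at hcompl ⊢
    have := hdle i
    omega
  · intro h
    set a : Fin m := ⟨m - 2, by omega⟩
    set b : Fin m := ⟨m - 1, by omega⟩
    have hab : a ≠ b := by simp [a, b, Fin.ext_iff]; omega
    have hcard : ({a, b} : Finset (Fin m)).card = 2 := by
      rw [Finset.card_insert_of_notMem (by simp [hab]), Finset.card_singleton]
    have hsum : ∑ i ∈ ({a, b} : Finset (Fin m)), d i = 2 * M := by
      rw [Finset.sum_insert (by simp [hab]), Finset.sum_singleton]
      have ha : d a = M := by simp [hd, a]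
      have hb : d b = M := by simp [hd, b]; omega
      omega
    have hcompl : ∑ j ∈ ({a, b} : Finset (Fin m))ᶜ, d j + ∑ j ∈ ({a, b} : Finset (Fin m)), d j = 3 * M := by
      rw [Finset.sum_compl_add_sum, htot]
    have := h {a, b} hcard
    omega
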